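/- The two-qubit state ρ_U = (1/4)(I⊗I + σ_x⊗σ_x) is separable, but K ρ_U K† is entangled, where K = (1/√2)·[[1,0,0,1],[0,√2,0,0],[0,0,√2,0],[−1,0,0,1]]; indeed the partial transpose of K ρ_U K† has eigenvalue (1−√2)/4 < 0. -/

import Mathlib

open Matrix
open scoped Kronecker ComplexOrder

noncomputable section

/-- A density matrix: positive semi-definite (hence Hermitian) with trace 1. -/
def IsDensity {n : Type*} [Fintype n] [DecidableEq n] (ρ : Matrix n n ℂ) : Prop :=
  ρ.PosSemidef ∧ ρ.trace = 1

/-- Separability: a convex combination of tensor products of density matrices. -/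
def SepState {d₁ d₂ : ℕ} (ρ : Matrix (Fin d₁ × Fin d₂) (Fin d₁ × Fin d₂) ℂ) : Prop :=
  ∃ (n : ℕ) (w : Fin n → ℝ) (σ₁ : Fin n → Matrix (Fin d₁) (Fin d₁) ℂ)
    (σ₂ : Fin n → Matrix (Fin d₂) (Fin d₂) ℂ),
    (∀ i, 0 ≤ w i) ∧ (∑ i, w i = 1) ∧ (∀ i, IsDensity (σ₁ i)) ∧ (∀ i, IsDensity (σ₂ i)) ∧
    ρ = ∑ i, (w i : ℂ) • (σ₁ i ⊗ₖ σ₂ i)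

/-- Partial transpose on the second tensor factor. -/
def ptransposeB {d₁ d₂ : ℕ} (ρ : Matrix (Fin d₁ × Fin d₂) (Fin d₁ × Fin d₂) ℂ) :
    Matrix (Fin d₁ × Fin d₂) (Fin d₁ × Fin d₂) ℂ :=
  Matrix.of fun p q => ρ (p.1, q.2) (q.1, p.2)

/-- The Pauli matrix `σ_x`. -/
def pauliX : Matrix (Fin 2) (Fin 2) ℂ := !![0, 1; 1, 0]

/-- `ρ_U = (1/4)(I⊗I + σ_x⊗σ_x)`. -/
def rhoU : Matrix (Fin 2 × Fin 2) (Fin 2 × Fin 2) ℂ :=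
  (4 : ℂ)⁻¹ • ((1 : Matrix (Fin 2 × Fin 2) (Fin 2 × Fin 2) ℂ) + pauliX ⊗ₖ pauliX)

/-- The unitary `K = (1/√2)[[1,0,0,1],[0,√2,0,0],[0,0,√2,0],[−1,0,0,1]]` in the
product basis `{|↑↑⟩,|↑↓⟩,|↓↑⟩,|↓↓⟩}`. -/
def Kmat : Matrix (Fin 2 × Fin 2) (Fin 2 × Fin 2) ℂ :=
  Matrix.of fun p q =>
    if p = ((0 : Fin 2), (0 : Fin 2)) then
      (if q = (0, 0) then ((Real.sqrt 2 : ℂ))⁻¹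
       else if q = (1, 1) then ((Real.sqrt 2 : ℂ))⁻¹ else 0)
    else if p = (0, 1) then (if q = (0, 1) then 1 else 0)
    else if p = (1, 0) then (if q = (1, 0) then 1 else 0)
    else
      (if q = (0, 0) then -((Real.sqrt 2 : ℂ))⁻¹
       else if q = (1, 1) then ((Real.sqrt 2 : ℂ))⁻¹ else 0)

/-! ### Auxiliary lemmas -/

lemma kron_conjTranspose_aux {d₁ d₂ : ℕ} (A : Matrix (Fin d₁) (Fin d₁) ℂ)
    (B : Matrix (Fin d₂) (Fin d₂) ℂ) : (A ⊗ₖ B)ᴴ = Aᴴ ⊗ₖ Bᴴ := by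
  ext ⟨a,b⟩ ⟨c,d⟩
  simp [conjTranspose_apply, kroneckerMap_apply]

lemma Matrix.posSemidef_iff_eq_transpose_mul_self {n : Type*} [Fintype n] [DecidableEq n]
    {A : Matrix n n ℂ} : A.PosSemidef ↔ ∃ B : Matrix n n ℂ, A = Bᴴ * B := by
  open scoped MatrixOrder in
  constructor
  · intro hA
    obtain ⟨B, rfl⟩ := CStarAlgebra.nonneg_iff_eq_star_mul_self.mp hA.nonneg
    exact ⟨B, rfl⟩
  · rintro ⟨B, rfl⟩
    exact posSemidef_conjTranspose_mul_self B

lemma psd_kron_aux {d₁ d₂ : ℕ} {A : Matrix (Fin d₁) (Fin d₁) ℂ}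
    {B : Matrix (Fin d₂) (Fin d₂) ℂ} (hA : A.PosSemidef) (hB : B.PosSemidef) :
    (A ⊗ₖ B).PosSemidef := by
  obtain ⟨C, rfl⟩ := posSemidef_iff_eq_transpose_mul_self.mp hA
  obtain ⟨D, rfl⟩ := posSemidef_iff_eq_transpose_mul_self.mp hB
  rw [mul_kronecker_mul, ← kron_conjTranspose_aux]
  exact posSemidef_conjTranspose_mul_self _

lemma psd_smul_aux {m : Type*} [Fintype m] {c : ℝ} (hc : 0 ≤ c) {M : Matrix m m ℂ}
    (hM : M.PosSemidef) : ((c : ℂ) • M).PosSemidef := by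
  refine posSemidef_iff_dotProduct_mulVec.mpr ⟨?_, ?_⟩
  · unfold Matrix.IsHermitian
    rw [conjTranspose_smul, hM.1]
    congr 1
    simp [Complex.star_def, Complex.conj_ofReal]
  · intro x
    rw [smul_mulVec, dotProduct_smul, smul_eq_mul]
    exact mul_nonneg (by exact_mod_cast Complex.zero_le_real.mpr hc) (hM.dotProduct_mulVec_nonneg x)

set_option maxHeartbeats 1000000 in
lemma sep_pt_psd_aux {d₁ d₂ : ℕ} {ρ : Matrix (Fin d₁ × Fin d₂) (Fin d₁ × Fin d₂) ℂ}
    (h : SepState ρ) : (ptransposeB ρ).PosSemidef := by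
  obtain ⟨n, w, σ₁, σ₂, hw, -, h1, h2, rfl⟩ := h
  have hpt : ptransposeB (∑ i, (w i : ℂ) • (σ₁ i ⊗ₖ σ₂ i))
      = ∑ i, (w i : ℂ) • (σ₁ i ⊗ₖ (σ₂ i)ᵀ) := by
    ext p q
    simp only [ptransposeB, Matrix.of_apply, Matrix.sum_apply, Matrix.smul_apply,
      kroneckerMap_apply, Matrix.transpose_apply]
  rw [hpt]
  apply Finset.sum_induction _ Matrix.PosSemidef (fun a b ha hb => ha.add hb)
    Matrix.PosSemidef.zero
  intro i _
  exact psd_smul_aux (hw i) (psd_kron_aux (h1 i).1 ((h2 i).1.transpose))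

/-- The conjugated state `K ρ_U K†`, computed explicitly (it is rational!). -/
def McAux : Matrix (Fin 2 × Fin 2) (Fin 2 × Fin 2) ℂ :=
  Matrix.of fun p q =>
    if p = ((0 : Fin 2), (0 : Fin 2)) ∧ q = (0, 0) then 1/2
    else if (p = ((0:Fin 2), (1:Fin 2)) ∨ p = (1, 0)) ∧ (q = (0, 1) ∨ q = (1, 0)) then 1/4
    else 0

set_option maxHeartbeats 2000000 in
lemma hM_aux : Kmat * rhoU * Kmatᴴ = McAux := by
  have hs : ((Real.sqrt 2 : ℝ) : ℂ) * ((Real.sqrt 2 : ℝ) : ℂ) = 2 := by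
    rw [← Complex.ofReal_mul, Real.mul_self_sqrt (by norm_num)]
    norm_num
  have hs0 : ((Real.sqrt 2 : ℝ) : ℂ) ≠ 0 := by
    simpa using Real.sqrt_ne_zero'.mpr (by norm_num)
  ext ⟨a,b⟩ ⟨c,d⟩
  fin_cases a <;> fin_cases b <;> fin_cases c <;> fin_cases d <;>
    · simp only [McAux, Kmat, rhoU, pauliX, Matrix.mul_apply, Matrix.conjTranspose_apply,
        Fintype.sum_prod_type, Fin.sum_univ_two, Matrix.smul_apply, Matrix.add_apply,
        Matrix.one_apply, kroneckerMap_apply, Matrix.of_apply, Prod.mk.injEq,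
        Matrix.cons_val', Matrix.cons_val_zero, Matrix.cons_val_one, Matrix.head_cons,
        Matrix.head_fin_const, Matrix.empty_val', Matrix.cons_val_fin_one,
        star_inv₀, Complex.star_def, Complex.conj_ofReal, star_neg, star_one, star_zero]
      norm_num
      try field_simp
      try linear_combination hs
      try linear_combination (-4 : ℂ) * hs
      try ring_nf

/-- The eigenvector of the partial transpose with eigenvalue `(1-√2)/4`. -/
def vAux : Fin 2 × Fin 2 → ℂ := fun p =>
  if p = ((0 : Fin 2), (0 : Fin 2)) then ((1 - Real.sqrt 2 : ℝ) : ℂ)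
  else if p = (1, 1) then 1 else 0

lemma eig_aux : ptransposeB (Kmat * rhoU * Kmatᴴ) *ᵥ vAux =
    (((1 - Real.sqrt 2) / 4 : ℝ) : ℂ) • vAux := by
  have hs : ((Real.sqrt 2 : ℝ) : ℂ) * ((Real.sqrt 2 : ℝ) : ℂ) = 2 := by
    rw [← Complex.ofReal_mul, Real.mul_self_sqrt (by norm_num)]
    norm_num
  rw [hM_aux]
  funext p
  obtain ⟨a, b⟩ := p
  fin_cases a <;> fin_cases b <;>
    · simp only [ptransposeB, McAux, vAux, Matrix.mulVec, dotProduct,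
        Fintype.sum_prod_type, Fin.sum_univ_two, Matrix.of_apply, Prod.mk.injEq,
        Pi.smul_apply, smul_eq_mul]
      norm_num
      all_goals push_cast
      all_goals try ring_nf
      all_goals try linear_combination (-(1:ℂ)/4) * hs


lemma densP_aux : IsDensity (!![1/2, 1/2; 1/2, 1/2] : Matrix (Fin 2) (Fin 2) ℂ) := by
  constructor
  · refine posSemidef_iff_eq_transpose_mul_self.mpr ⟨!![1/2, 1/2; 1/2, 1/2], ?_⟩
    ext i j
    fin_cases i <;> fin_cases j <;>
      simp [Matrix.mul_apply, Fin.sum_univ_two, Matrix.conjTranspose_apply, map_ofNat] <;> norm_num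
  · norm_num [Matrix.trace, Matrix.diag, Fin.sum_univ_two]

lemma densM_aux : IsDensity (!![1/2, -(1/2); -(1/2), 1/2] : Matrix (Fin 2) (Fin 2) ℂ) := by
  constructor
  · refine posSemidef_iff_eq_transpose_mul_self.mpr ⟨!![1/2, -(1/2); -(1/2), 1/2], ?_⟩
    ext i j
    fin_cases i <;> fin_cases j <;>
      simp [Matrix.mul_apply, Fin.sum_univ_two, Matrix.conjTranspose_apply, map_ofNat] <;> norm_num
  · norm_num [Matrix.trace, Matrix.diag, Fin.sum_univ_two]

/-- `ρ_U` is separable, but `K ρ_U K†` is entangled: its partial transpose has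
the negative eigenvalue `(1−√2)/4`. -/
theorem rhoU_separable_but_conjugate_entangled :
    SepState rhoU ∧ ¬ SepState (Kmat * rhoU * Kmatᴴ) ∧
      ∃ v : Fin 2 × Fin 2 → ℂ, v ≠ 0 ∧
        ptransposeB (Kmat * rhoU * Kmatᴴ) *ᵥ v =
          (((1 - Real.sqrt 2) / 4 : ℝ) : ℂ) • v := by
  have hsqrt : (1 : ℝ) < Real.sqrt 2 := by
    rw [show (1:ℝ) = Real.sqrt 1 by simp]
    exact Real.sqrt_lt_sqrt (by norm_num) (by norm_num)
  refine ⟨?_, ?_, ?_⟩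
  · -- separability
    refine ⟨2, fun _ => 1/2, ![!![1/2, 1/2; 1/2, 1/2], !![1/2, -(1/2); -(1/2), 1/2]],
      ![!![1/2, 1/2; 1/2, 1/2], !![1/2, -(1/2); -(1/2), 1/2]], fun i => by norm_num,
      by norm_num [Fin.sum_univ_two], ?_, ?_, ?_⟩
    · intro i
      fin_cases i
      · exact densP_aux
      · exact densM_aux
    · intro i
      fin_cases i
      · exact densP_aux
      · exact densM_aux
    · ext ⟨a,b⟩ ⟨c,d⟩
      fin_cases a <;> fin_cases b <;> fin_cases c <;> fin_cases d <;>
        · simp [rhoU, pauliX, Fin.sum_univ_two, kroneckerMap_apply, Matrix.one_apply,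
            Prod.mk.injEq]
          all_goals try norm_num
          all_goals decide
  · -- not separable
    intro h
    have hpsd := (sep_pt_psd_aux h).dotProduct_mulVec_nonneg vAux
    rw [eig_aux] at hpsd
    have hval : star vAux ⬝ᵥ (((1 - Real.sqrt 2) / 4 : ℝ) : ℂ) • vAux =
        (((1 - Real.sqrt 2) / 4 * ((1 - Real.sqrt 2) * (1 - Real.sqrt 2) + 1) : ℝ) : ℂ) := by
      simp only [dotProduct, Fintype.sum_prod_type, Fin.sum_univ_two, Pi.star_apply,
        Pi.smul_apply, smul_eq_mul, vAux, Prod.mk.injEq]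
      norm_num [Complex.star_def, Complex.conj_ofReal]
      push_cast
      ring
    rw [hval, Complex.zero_le_real] at hpsd
    nlinarith [hpsd, hsqrt]
  · -- eigenvector
    refine ⟨vAux, ?_, eig_aux⟩
    intro h
    have := congrFun h ((1 : Fin 2), (1 : Fin 2))
    simp [vAux] at this
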